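/- (Gentle coherent measurement) Let ρ_1,…,ρ_K be density operators on ℂ^{d_A} and let Λ_1,…,Λ_K be positive semidefinite matrices on ℂ^{d_A} with ∑_{k=1}^K Λ_k = I (a POVM), and suppose Tr(ρ_k Λ_k) ≥ 1 − ε for all k, where 0 ≤ ε ≤ 1. For each k let |φ_k⟩ ∈ ℂ^{d_R} ⊗ ℂ^{d_A} be a unit vector whose partial trace over the first factor equals ρ_k (a purification of ρ_k). Then there exists a matrix D : ℂ^{d_A} → ℂ^{d_A} ⊗ ℂ^K with D^†D = I (an isometry) such that for every k, ‖(I_{d_R} ⊗ D)|φ_k⟩⟨φ_k|(I_{d_R} ⊗ D)^† − |φ_k⟩⟨φ_k| ⊗ |k⟩⟨k|‖₁ ≤ √(8ε). -/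

import Mathlib

set_option linter.unusedSectionVars false


open Matrix Kronecker ComplexOrder

noncomputable section

/-- outer product `|v⟩⟨v|`. -/
def proj {ι : Type*} (v : ι → ℂ) : Matrix ι ι ℂ :=
  Matrix.of fun i j => v i * star (v j)

/-- partial trace over the first tensor factor. -/
def ptraceLeft {ι κ : Type*} [Fintype ι] (M : Matrix (ι × κ) (ι × κ) ℂ) : Matrix κ κ ℂ :=
  Matrix.of fun j j' => ∑ i, M (i, j) (i, j')

/-- trace norm `‖M‖₁ = Tr √(MᴴM)`. -/
def traceNorm {ι : Type*} [Fintype ι] [DecidableEq ι] (M : Matrix ι ι ℂ) : ℝ :=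
  (((Matrix.posSemidef_conjTranspose_mul_self M).isHermitian.eigenvectorUnitary.1 *
      Matrix.diagonal (((↑) : ℝ → ℂ) ∘ (Real.sqrt ·) ∘
        (Matrix.posSemidef_conjTranspose_mul_self M).isHermitian.eigenvalues) *
      (star (Matrix.posSemidef_conjTranspose_mul_self M).isHermitian.eigenvectorUnitary :
        Matrix ι ι ℂ)).trace).re

namespace Matrix.PosSemidef
open scoped MatrixOrder
variable {n : Type*} [Fintype n] [DecidableEq n]

def sqrt {A : Matrix n n ℂ} (hA : A.PosSemidef) : Matrix n n ℂ :=
  (hA.1.eigenvectorUnitary : Matrix n n ℂ) *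
    Matrix.diagonal (RCLike.ofReal ∘ Real.sqrt ∘ hA.1.eigenvalues) *
    (star hA.1.eigenvectorUnitary : Matrix n n ℂ)

lemma posSemidef_sqrt {A : Matrix n n ℂ} (hA : A.PosSemidef) : hA.sqrt.PosSemidef := by
  unfold sqrt
  rw [Matrix.star_eq_conjTranspose]
  refine Matrix.PosSemidef.mul_mul_conjTranspose_same ?_ _
  refine Matrix.posSemidef_diagonal_iff.mpr fun i => ?_
  exact Complex.zero_le_real.mpr (Real.sqrt_nonneg _)

lemma sqrt_mul_self {A : Matrix n n ℂ} (hA : A.PosSemidef) : hA.sqrt * hA.sqrt = A := by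
  unfold sqrt
  conv_rhs => rw [hA.1.spectral_theorem, Unitary.conjStarAlgAut_apply]
  have hU : (star hA.1.eigenvectorUnitary : Matrix n n ℂ) * hA.1.eigenvectorUnitary = 1 :=
    Unitary.coe_star_mul_self _
  simp only [Matrix.mul_assoc]
  rw [← Matrix.mul_assoc (star hA.1.eigenvectorUnitary : Matrix n n ℂ), hU, Matrix.one_mul,
    ← Matrix.mul_assoc (Matrix.diagonal _), Matrix.diagonal_mul_diagonal]
  congr 3
  funext i
  simp only [Function.comp_apply]
  rw [← RCLike.ofReal_mul, Real.mul_self_sqrt (hA.eigenvalues_nonneg i)]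

lemma eq_sqrt_of_sq_eq {A : Matrix n n ℂ} (hA : A.PosSemidef) (B : Matrix n n ℂ)
    {hB : B.PosSemidef} (hAB : A ^ 2 = B) : A = hB.sqrt := by
  have h1 : CFC.sqrt B = A :=
    (CFC.sqrt_eq_iff B A (nonneg_iff_posSemidef.mpr hB) (nonneg_iff_posSemidef.mpr hA)).mpr
      (by rw [← hAB, pow_two])
  have h2 : CFC.sqrt B = hB.sqrt :=
    (CFC.sqrt_eq_iff B hB.sqrt (nonneg_iff_posSemidef.mpr hB)
      (nonneg_iff_posSemidef.mpr hB.posSemidef_sqrt)).mpr hB.sqrt_mul_self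
  rw [← h1, h2]

end Matrix.PosSemidef

lemma traceNorm_eq_sqrt {ι : Type*} [Fintype ι] [DecidableEq ι] (M : Matrix ι ι ℂ) :
    traceNorm M = ((Matrix.posSemidef_conjTranspose_mul_self M).sqrt.trace).re := rfl

namespace Gentle

variable {ι : Type*} [Fintype ι]

/-- outer product of two vectors -/
def outer (a b : ι → ℂ) : Matrix ι ι ℂ := Matrix.of fun i j => a i * star (b j)

lemma proj_eq_outer (v : ι → ℂ) : proj v = outer v v := rfl

lemma outer_mul_outer [DecidableEq ι] (a b c d : ι → ℂ) :
    outer a b * outer c d = (star b ⬝ᵥ c) • outer a d := by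
  ext i j
  simp only [outer, Matrix.mul_apply, Matrix.of_apply, Matrix.smul_apply, dotProduct,
    smul_eq_mul, Finset.sum_mul, Pi.star_apply]
  exact Finset.sum_congr rfl fun x _ => by ring

lemma trace_outer (a b : ι → ℂ) : (outer a b).trace = star b ⬝ᵥ a := by
  simp only [Matrix.trace, Matrix.diag, outer, Matrix.of_apply, dotProduct, Pi.star_apply]
  exact Finset.sum_congr rfl fun x _ => by ring

lemma conjTranspose_outer (a b : ι → ℂ) : (outer a b)ᴴ = outer b a := by
  ext i j; simp [outer, Matrix.conjTranspose_apply, mul_comm]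

lemma star_dot_comm (a b : ι → ℂ) : star a ⬝ᵥ b = star (star b ⬝ᵥ a) := by
  simp only [dotProduct, star_sum, Pi.star_apply, star_mul', star_star]
  exact Finset.sum_congr rfl fun x _ => by ring

end Gentle

namespace Gentle

variable {ι : Type*} [Fintype ι] [DecidableEq ι]

lemma psd_trace_re_nonneg {M : Matrix ι ι ℂ} (hM : M.PosSemidef) : 0 ≤ M.trace.re := by
  have h : ∀ i, 0 ≤ (M i i).re := by
    intro i
    have := hM.re_dotProduct_nonneg (Pi.single i 1)
    simpa [dotProduct, Matrix.mulVec_single, Pi.single_apply, Finset.sum_ite_eq,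
      apply_ite] using this
  simp only [Matrix.trace, Matrix.diag, Complex.re_sum]
  exact Finset.sum_nonneg fun i _ => h i

lemma psd_trace_eq_zero {M : Matrix ι ι ℂ} (hM : M.PosSemidef) (h : M.trace = 0) : M = 0 := by
  have hev : ∀ i, hM.1.eigenvalues i = 0 := by
    have htr : ∑ i, hM.1.eigenvalues i = 0 := by
      have hdt : M.trace = ∑ i, (hM.1.eigenvalues i : ℂ) := by
        conv_lhs => rw [hM.1.spectral_theorem]
        rw [Unitary.conjStarAlgAut_apply, Matrix.trace_mul_cycle, Unitary.coe_star_mul_self,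
          Matrix.one_mul, Matrix.trace_diagonal]
        rfl
      rw [h] at hdt
      exact_mod_cast hdt.symm
    intro i
    have := Finset.sum_eq_zero_iff_of_nonneg (fun i _ => hM.eigenvalues_nonneg i) |>.mp htr
    exact this i (Finset.mem_univ i)
  have := hM.1.spectral_theorem
  rw [show (Matrix.diagonal (RCLike.ofReal ∘ hM.1.eigenvalues) : Matrix ι ι ℂ) = 0 by
        ext i j; simp [Matrix.diagonal, hev, Function.comp]] at this
  simpa using this

end Gentle

namespace Gentle

variable {ι : Type*} [Fintype ι] [DecidableEq ι]

lemma psd_real_smul {M : Matrix ι ι ℂ} (hM : M.PosSemidef) {r : ℝ} (hr : 0 ≤ r) :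
    ((r : ℂ) • M).PosSemidef := by
  exact hM.smul (Complex.zero_le_real.mpr hr)

lemma traceNorm_proj_sub_proj (ψ χ : ι → ℂ)
    (hψ : star ψ ⬝ᵥ ψ = 1) (hχ : star χ ⬝ᵥ χ = 1) :
    traceNorm (proj ψ - proj χ) = 2 * Real.sqrt (1 - Complex.normSq (star χ ⬝ᵥ ψ)) := by
  set s : ℂ := star χ ⬝ᵥ ψ with hs
  set c : ℝ := 1 - Complex.normSq s with hc
  set M : Matrix ι ι ℂ := proj ψ - proj χ with hMdef
  have hψχ : star ψ ⬝ᵥ χ = star s := by rw [hs, ← star_dot_comm]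
  have hcC : (c : ℂ) = 1 - s * star s := by
    rw [hc]
    push_cast
    rw [Complex.star_def, Complex.mul_conj]
  have hMH : Mᴴ = M := by
    rw [hMdef, Matrix.conjTranspose_sub, proj_eq_outer, proj_eq_outer,
      conjTranspose_outer, conjTranspose_outer]
  have hMM : M * M = outer ψ ψ + outer χ χ - (star s) • outer ψ χ - s • outer χ ψ := by
    rw [hMdef, proj_eq_outer, proj_eq_outer, sub_mul, mul_sub, mul_sub,
      outer_mul_outer, outer_mul_outer, outer_mul_outer, outer_mul_outer,
      hψ, hχ, hψχ, ← hs, one_smul, one_smul]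
    abel
  have hM3 : M * M * M = (c : ℂ) • M := by
    rw [hMM, hMdef, proj_eq_outer, proj_eq_outer]
    simp only [smul_mul_assoc, mul_sub, sub_mul, add_mul, outer_mul_outer,
      hψ, hχ, hψχ, ← hs]
    rw [hcC]
    module
  have htr : (M * M).trace = 2 * (c : ℂ) := by
    rw [hMM, Matrix.trace_sub, Matrix.trace_sub, Matrix.trace_add,
      Matrix.trace_smul, Matrix.trace_smul, trace_outer, trace_outer,
      trace_outer, trace_outer, hψ, hχ, ← hs, hψχ, hcC]
    simp only [smul_eq_mul]
    ring
  have hpsd : (M * M).PosSemidef := by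
    have h := Matrix.posSemidef_conjTranspose_mul_self M
    rwa [hMH] at h
  have hc0 : 0 ≤ c := by
    have h := psd_trace_re_nonneg hpsd
    rw [htr] at h
    simp only [Complex.mul_re, Complex.ofReal_re, Complex.ofReal_im] at h
    norm_num at h
    linarith
  rcases eq_or_lt_of_le hc0 with hceq | hcpos
  · -- degenerate case : c = 0
    have hMM0 : M * M = 0 := by
      apply psd_trace_eq_zero hpsd
      rw [htr, ← hceq]
      norm_num
    have hsqrt : (0 : Matrix ι ι ℂ) = (Matrix.posSemidef_conjTranspose_mul_self M).sqrt := by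
      apply Matrix.PosSemidef.eq_sqrt_of_sq_eq Matrix.PosSemidef.zero
      rw [hMH, hMM0]
      simp
    rw [traceNorm_eq_sqrt, ← hsqrt, ← hceq]
    simp
  · -- nondegenerate case
    set r : ℝ := (Real.sqrt c)⁻¹ with hr
    have hr0 : 0 ≤ r := by positivity
    have hcne : c ≠ 0 := ne_of_gt hcpos
    have hrc : r ^ 2 * c = 1 := by
      rw [hr, inv_pow, Real.sq_sqrt hc0, inv_mul_cancel₀ hcne]
    set N : Matrix ι ι ℂ := (r : ℂ) • (M * M) with hN
    have hNpsd : N.PosSemidef := psd_real_smul hpsd hr0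
    have h4 : (M * M) * (M * M) = (c : ℂ) • (M * M) := by
      rw [← mul_assoc, hM3, smul_mul_assoc]
    have hNsq : N ^ 2 = Mᴴ * M := by
      rw [hMH, pow_two, hN, smul_mul_assoc, mul_smul_comm, smul_smul, h4, smul_smul]
      rw [show (r : ℂ) * (r : ℂ) * (c : ℂ) = ((r ^ 2 * c : ℝ) : ℂ) by push_cast; ring, hrc]
      simp
    have hsqrtN : N = (Matrix.posSemidef_conjTranspose_mul_self M).sqrt :=
      hNpsd.eq_sqrt_of_sq_eq _ hNsq
    rw [traceNorm_eq_sqrt, ← hsqrtN, hN, Matrix.trace_smul, htr]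
    simp only [smul_eq_mul, ← Complex.ofReal_ofNat, ← Complex.ofReal_mul, Complex.ofReal_re]
    have hsne : Real.sqrt c ≠ 0 := by positivity
    have key : Real.sqrt c * Real.sqrt c = c := Real.mul_self_sqrt hc0
    have hrs : r * Real.sqrt c = 1 := by rw [hr]; exact inv_mul_cancel₀ hsne
    linear_combination (-(2*r)) * key + (2 * Real.sqrt c) * hrs

lemma eigenvalues_le_one {Λ : Matrix ι ι ℂ} (hΛ : Λ.PosSemidef)
    (h1 : (1 - Λ).PosSemidef) (i : ι) : hΛ.1.eigenvalues i ≤ 1 := by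
  set v : ι → ℂ := ⇑(hΛ.1.eigenvectorBasis i) with hv
  have hvv : star v ⬝ᵥ v = 1 := by
    have hn := hΛ.1.eigenvectorBasis.orthonormal.1 i
    have : (inner ℂ (hΛ.1.eigenvectorBasis i) (hΛ.1.eigenvectorBasis i) : ℂ) = 1 := by
      rw [inner_self_eq_norm_sq_to_K, hn]; norm_num
    rw [EuclideanSpace.inner_eq_star_dotProduct] at this
    rw [dotProduct_comm] at this
    exact this
  have h := h1.dotProduct_mulVec_nonneg v
  rw [Matrix.sub_mulVec, Matrix.one_mulVec, dotProduct_sub, hvv, hv,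
    hΛ.1.mulVec_eigenvectorBasis i, dotProduct_smul, ← hv, hvv] at h
  rw [show (hΛ.1.eigenvalues i : ℝ) • (1 : ℂ) = ((hΛ.1.eigenvalues i : ℝ) : ℂ) by
    simp [Complex.real_smul]] at h
  rw [show (1 : ℂ) - ((hΛ.1.eigenvalues i : ℝ) : ℂ) = ((1 - hΛ.1.eigenvalues i : ℝ) : ℂ) by
    push_cast; ring] at h
  have := Complex.zero_le_real.mp h
  linarith

lemma sqrt_sub_psd {Λ : Matrix ι ι ℂ} (hΛ : Λ.PosSemidef) (h1 : (1 - Λ).PosSemidef) :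
    (hΛ.sqrt - Λ).PosSemidef := by
  have key : hΛ.sqrt - Λ =
      (hΛ.1.eigenvectorUnitary : Matrix ι ι ℂ) *
        Matrix.diagonal (fun i => ((Real.sqrt (hΛ.1.eigenvalues i) - hΛ.1.eigenvalues i : ℝ) : ℂ)) *
        (hΛ.1.eigenvectorUnitary : Matrix ι ι ℂ)ᴴ := by
    have h2 : hΛ.sqrt - Λ = (hΛ.1.eigenvectorUnitary : Matrix ι ι ℂ) *
        (Matrix.diagonal (RCLike.ofReal ∘ Real.sqrt ∘ hΛ.1.eigenvalues) -
          Matrix.diagonal (RCLike.ofReal ∘ hΛ.1.eigenvalues)) *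
        star (hΛ.1.eigenvectorUnitary : Matrix ι ι ℂ) := by
      rw [Matrix.mul_sub, Matrix.sub_mul]
      exact congrArg₂ (· - ·) rfl (by simpa only [Unitary.conjStarAlgAut_apply] using hΛ.1.spectral_theorem)
    rw [h2, Matrix.diagonal_sub, Matrix.star_eq_conjTranspose]
    congr 2
    ext i
    simp [Function.comp]
  rw [key]
  refine Matrix.PosSemidef.mul_mul_conjTranspose_same ?_ _
  refine Matrix.posSemidef_diagonal_iff.mpr fun i => ?_
  refine Complex.zero_le_real.mpr ?_
  have h0 := hΛ.eigenvalues_nonneg i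
  have h1' := eigenvalues_le_one hΛ h1 i
  have : hΛ.1.eigenvalues i ≤ Real.sqrt (hΛ.1.eigenvalues i) := by
    nlinarith [Real.sq_sqrt h0, Real.sqrt_nonneg (hΛ.1.eigenvalues i),
      Real.sqrt_le_sqrt (show hΛ.1.eigenvalues i ^ 2 ≤ hΛ.1.eigenvalues i by nlinarith),
      Real.sqrt_sq h0]
  linarith

lemma trace_mul_psd_re_nonneg {A B : Matrix ι ι ℂ} (hA : A.PosSemidef) (hB : B.PosSemidef) :
    0 ≤ ((A * B).trace).re := by
  have h : (A * B).trace = (hA.sqrt * B * hA.sqrt).trace := by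
    conv_lhs => rw [← hA.sqrt_mul_self]
    rw [Matrix.mul_assoc, Matrix.trace_mul_comm]
  rw [h]
  have hpsd : (hA.sqrt * B * hA.sqrt).PosSemidef := by
    have h2 := hB.conjTranspose_mul_mul_same hA.sqrt
    rwa [hA.posSemidef_sqrt.1] at h2
  exact psd_trace_re_nonneg hpsd

end Gentle

namespace Gentle

lemma mul_proj_mul_conjTranspose {α β : Type*} [Fintype β] (M : Matrix α β ℂ) (v : β → ℂ) :
    M * proj v * Mᴴ = proj (M *ᵥ v) := by
  ext i j
  simp only [Matrix.mul_apply, proj, Matrix.of_apply, Matrix.conjTranspose_apply,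
    Matrix.mulVec, dotProduct, star_sum, Finset.mul_sum, Finset.sum_mul, star_mul']
  exact Finset.sum_congr rfl fun x _ => Finset.sum_congr rfl fun y _ => by ring

lemma final_bound {ε : ℝ} (hε0 : 0 ≤ ε) (s : ℂ) (hres : 1 - ε ≤ s.re) :
    2 * Real.sqrt (1 - Complex.normSq s) ≤ Real.sqrt (8 * ε) := by
  have hsq : s.re ^ 2 ≤ Complex.normSq s := by
    rw [Complex.normSq_apply]; nlinarith [sq_nonneg s.im]
  by_cases h : Complex.normSq s ≤ 1
  · have h1 : s.re ≤ 1 := by nlinarith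
    have hc2 : 1 - Complex.normSq s ≤ 2 * ε := by nlinarith
    have h8 : Real.sqrt (8 * ε) = 2 * Real.sqrt (2 * ε) := by
      rw [show (8:ℝ) * ε = 2 ^ 2 * (2 * ε) by ring, Real.sqrt_mul (by positivity),
        Real.sqrt_sq (by norm_num)]
    rw [h8]
    have := Real.sqrt_le_sqrt hc2
    linarith
  · push_neg at h
    rw [show Real.sqrt (1 - Complex.normSq s) = 0 from
      Real.sqrt_eq_zero'.mpr (by linarith)]
    rw [mul_zero]
    positivity

end Gentle


open Gentle in
/-- **Gentle coherent measurement.**  Given density operators `ρ_k`, a POVM `{Λ_k}` with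
`Tr(ρ_k Λ_k) ≥ 1 − ε`, and purifications `|φ_k⟩` of the `ρ_k`, there is an isometry
`D : ℂ^{dA} → ℂ^{dA} ⊗ ℂ^K` which coherently records `k` while disturbing each `|φ_k⟩`
by at most `√(8ε)` in trace norm. -/
theorem gentle_coherent_measurement {dA dR K : ℕ} (ε : ℝ) (hε0 : 0 ≤ ε) (hε1 : ε ≤ 1)
    (ρ : Fin K → Matrix (Fin dA) (Fin dA) ℂ)
    (hρ : ∀ k, (ρ k).PosSemidef ∧ (ρ k).trace = 1)
    (Λ : Fin K → Matrix (Fin dA) (Fin dA) ℂ)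
    (hΛpos : ∀ k, (Λ k).PosSemidef) (hΛsum : ∑ k, Λ k = 1)
    (hsucc : ∀ k, 1 - ε ≤ ((ρ k * Λ k).trace).re)
    (φ : Fin K → (Fin dR × Fin dA → ℂ))
    (hφunit : ∀ k, ∑ x, Complex.normSq (φ k x) = 1)
    (hφpur : ∀ k, ptraceLeft (proj (φ k)) = ρ k) :
    ∃ D : Matrix (Fin dA × Fin K) (Fin dA) ℂ, Dᴴ * D = 1 ∧
      ∀ k, traceNorm
          (((1 : Matrix (Fin dR) (Fin dR) ℂ) ⊗ₖ D) * proj (φ k) *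
              ((1 : Matrix (Fin dR) (Fin dR) ℂ) ⊗ₖ D)ᴴ -
            Matrix.reindex (Equiv.prodAssoc (Fin dR) (Fin dA) (Fin K))
              (Equiv.prodAssoc (Fin dR) (Fin dA) (Fin K))
              (proj (φ k) ⊗ₖ proj (fun j : Fin K => if j = k then 1 else 0)))
        ≤ Real.sqrt (8 * ε) := by
  classical
  set S : Fin K → Matrix (Fin dA) (Fin dA) ℂ := fun k => (hΛpos k).sqrt with hSdef
  have hSherm : ∀ k, (S k)ᴴ = S k := fun k => (hΛpos k).posSemidef_sqrt.1
  have hSsq : ∀ k, S k * S k = Λ k := fun k => (hΛpos k).sqrt_mul_self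
  set D : Matrix (Fin dA × Fin K) (Fin dA) ℂ := Matrix.of fun p b => S p.2 p.1 b with hDdef
  have hDD : Dᴴ * D = 1 := by
    ext b b'
    rw [Matrix.mul_apply, Fintype.sum_prod_type]
    have hSq2 : ∀ j, (S j)ᴴ * S j = Λ j := fun j => by rw [hSherm j, hSsq j]
    have hcol : ∀ j : Fin K, ∑ a, Dᴴ b (a, j) * D (a, j) b' = Λ j b b' := by
      intro j
      rw [← hSq2 j, Matrix.mul_apply]
      exact Finset.sum_congr rfl fun a _ => by
        rw [Matrix.conjTranspose_apply, Matrix.conjTranspose_apply]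
        rfl
    rw [Finset.sum_comm]
    calc ∑ j : Fin K, ∑ a, Dᴴ b (a, j) * D (a, j) b' = ∑ j : Fin K, Λ j b b' :=
          Finset.sum_congr rfl fun j _ => hcol j
      _ = (∑ j, Λ j) b b' := by rw [Matrix.sum_apply]
      _ = (1 : Matrix (Fin dA) (Fin dA) ℂ) b b' := by rw [hΛsum]
  refine ⟨D, hDD, fun k => ?_⟩
  set E : Matrix (Fin dR × (Fin dA × Fin K)) (Fin dR × Fin dA) ℂ :=
    (1 : Matrix (Fin dR) (Fin dR) ℂ) ⊗ₖ D with hEdef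
  set ψ : Fin dR × (Fin dA × Fin K) → ℂ := E *ᵥ φ k with hψdef
  set χ : Fin dR × (Fin dA × Fin K) → ℂ :=
    fun x => φ k (x.1, x.2.1) * (if x.2.2 = k then 1 else 0) with hχdef
  have hEE : Eᴴ * E = 1 := by
    have hEH : Eᴴ = (1 : Matrix (Fin dR) (Fin dR) ℂ)ᴴ ⊗ₖ Dᴴ := by
      ext x y
      rw [Matrix.conjTranspose_apply, hEdef]
      simp only [Matrix.kroneckerMap_apply, Matrix.conjTranspose_apply, star_mul']
    rw [hEH, Matrix.conjTranspose_one, hEdef, ← Matrix.mul_kronecker_mul, Matrix.one_mul,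
      hDD, Matrix.one_kronecker_one]
  have hφdot : star (φ k) ⬝ᵥ φ k = 1 := by
    have : star (φ k) ⬝ᵥ φ k = ((∑ x, Complex.normSq (φ k x) : ℝ) : ℂ) := by
      rw [dotProduct]
      push_cast
      exact Finset.sum_congr rfl fun x _ => by
        rw [Pi.star_apply, Complex.star_def, mul_comm, Complex.mul_conj]
    rw [this, hφunit k]
    norm_num
  have hψu : star ψ ⬝ᵥ ψ = 1 := by
    rw [hψdef, Matrix.star_mulVec, Matrix.dotProduct_mulVec,
      Matrix.vecMul_vecMul, hEE, Matrix.vecMul_one, hφdot]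
  have hχkey : ∀ x : Fin dR × (Fin dA × Fin K), star (χ x) * χ x =
      if x.2.2 = k then ((Complex.normSq (φ k (x.1, x.2.1)) : ℝ) : ℂ) else 0 := by
    intro x
    by_cases h : x.2.2 = k <;>
      simp [hχdef, h, Complex.star_def, mul_comm, Complex.mul_conj]
  have hχu : star χ ⬝ᵥ χ = 1 := by
    have h1 : star χ ⬝ᵥ χ = ∑ r : Fin dR, ∑ a : Fin dA,
        ((Complex.normSq (φ k (r, a)) : ℝ) : ℂ) := by
      rw [dotProduct, Fintype.sum_prod_type]
      refine Finset.sum_congr rfl fun r _ => ?_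
      rw [Fintype.sum_prod_type]
      refine Finset.sum_congr rfl fun a _ => ?_
      calc ∑ j, star (χ (r, (a, j))) * χ (r, (a, j))
          = ∑ j, if j = k then ((Complex.normSq (φ k (r, a)) : ℝ) : ℂ) else 0 :=
            Finset.sum_congr rfl fun j _ => hχkey (r, (a, j))
        _ = _ := by simp
    rw [h1]
    have h2 : ∑ r : Fin dR, ∑ a : Fin dA, ((Complex.normSq (φ k (r, a)) : ℝ) : ℂ) =
        ((∑ x : Fin dR × Fin dA, Complex.normSq (φ k x) : ℝ) : ℂ) := by
      rw [Fintype.sum_prod_type]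
      push_cast
      rfl
    rw [h2, hφunit k]
    norm_num
  have hψval : ∀ (r : Fin dR) (a : Fin dA) (j : Fin K),
      ψ (r, (a, j)) = ∑ a', S j a a' * φ k (r, a') := by
    intro r a j
    rw [hψdef]
    show ∑ y : Fin dR × Fin dA, E (r, (a, j)) y * φ k y = _
    rw [Fintype.sum_prod_type]
    calc ∑ r', ∑ a', E (r, (a, j)) (r', a') * φ k (r', a')
        = ∑ r', if r = r' then ∑ a', S j a a' * φ k (r', a') else 0 :=
          Finset.sum_congr rfl fun r' _ => by
            by_cases h : r = r' <;>
              simp [hEdef, hDdef, Matrix.kroneckerMap_apply, Matrix.one_apply,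
                Matrix.of_apply, h]
      _ = _ := by simp
  have hsval : star χ ⬝ᵥ ψ = (S k * ρ k).trace := by
    rw [← hφpur k]
    have hL : star χ ⬝ᵥ ψ = ∑ r, ∑ a, ∑ a',
        star (φ k (r, a)) * (S k a a' * φ k (r, a')) := by
      rw [dotProduct, Fintype.sum_prod_type]
      refine Finset.sum_congr rfl fun r _ => ?_
      rw [Fintype.sum_prod_type]
      refine Finset.sum_congr rfl fun a _ => ?_
      calc ∑ j, star (χ (r, (a, j))) * ψ (r, (a, j))
          = ∑ j, if j = k then star (φ k (r, a)) * ψ (r, (a, j)) else 0 :=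
            Finset.sum_congr rfl fun j _ => by
              by_cases h : j = k <;> simp [hχdef, h]
        _ = star (φ k (r, a)) * ψ (r, (a, k)) := by simp
        _ = ∑ a', star (φ k (r, a)) * (S k a a' * φ k (r, a')) := by
            rw [hψval r a k, Finset.mul_sum]
    have hR : (S k * ptraceLeft (proj (φ k))).trace = ∑ a, ∑ a', ∑ r,
        S k a a' * (φ k (r, a') * star (φ k (r, a))) := by
      rw [Matrix.trace]
      refine Finset.sum_congr rfl fun a _ => ?_
      rw [Matrix.diag_apply, Matrix.mul_apply]
      refine Finset.sum_congr rfl fun a' _ => ?_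
      show S k a a' * (∑ r, proj (φ k) (r, a') (r, a)) = _
      rw [Finset.mul_sum]
      rfl
    rw [hL, hR, Finset.sum_comm]
    refine Finset.sum_congr rfl fun a _ => ?_
    rw [Finset.sum_comm]
    exact Finset.sum_congr rfl fun a' _ => Finset.sum_congr rfl fun r _ => by ring
  have hre : 1 - ε ≤ (star χ ⬝ᵥ ψ).re := by
    have hΛk1 : (1 - Λ k).PosSemidef := by
      have hsum : ∀ t : Finset (Fin K), (∑ j ∈ t, Λ j).PosSemidef := fun t =>
        Finset.sum_induction _ _ (fun a b ha hb => ha.add hb) Matrix.PosSemidef.zero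
          (fun j _ => hΛpos j)
      have : (1 : Matrix (Fin dA) (Fin dA) ℂ) - Λ k = ∑ j ∈ Finset.univ.erase k, Λ j := by
        rw [← hΛsum, ← Finset.sum_erase_add _ _ (Finset.mem_univ k)]
        exact add_sub_cancel_right _ _
      rw [this]
      exact hsum _
    have hd : 0 ≤ ((ρ k) * (S k - Λ k)).trace.re :=
      trace_mul_psd_re_nonneg (hρ k).1 (sqrt_sub_psd (hΛpos k) hΛk1)
    rw [Matrix.mul_sub, Matrix.trace_sub, Complex.sub_re] at hd
    have h2 : (star χ ⬝ᵥ ψ).re = ((ρ k) * S k).trace.re := by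
      rw [hsval, Matrix.trace_mul_comm]
    rw [h2]
    have := hsucc k
    linarith
  have hA : E * proj (φ k) * Eᴴ = proj ψ := mul_proj_mul_conjTranspose E (φ k)
  have hB : (Matrix.reindex (Equiv.prodAssoc (Fin dR) (Fin dA) (Fin K))
      (Equiv.prodAssoc (Fin dR) (Fin dA) (Fin K))
      (proj (φ k) ⊗ₖ proj (fun j : Fin K => if j = k then 1 else 0))) = proj χ := by
    ext x y
    obtain ⟨r, a, j⟩ := x
    obtain ⟨r', a', j'⟩ := y
    simp only [Matrix.reindex_apply, Matrix.submatrix_apply, Equiv.prodAssoc_symm_apply,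
      Matrix.kroneckerMap_apply, proj, Matrix.of_apply, hχdef, star_mul',
      apply_ite (star : ℂ → ℂ), star_one, star_zero]
    ring
  rw [show ((1 : Matrix (Fin dR) (Fin dR) ℂ) ⊗ₖ D) * proj (φ k) *
      ((1 : Matrix (Fin dR) (Fin dR) ℂ) ⊗ₖ D)ᴴ = proj ψ from hA]
  rw [hB, traceNorm_proj_sub_proj ψ χ hψu hχu]
  exact final_bound hε0 _ hre
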